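/- Let (Λ_Q, f) be a C^{1+Lip} expansive and transitive Markov system. Then χ(x) ≥ 0 for every x ∈ Λ_Q. -/

import Mathlib

open Set Metric Filter MeasureTheory
open scoped Classical

/-- The word `[ω 0, ω 1, …, ω (n-1)]` read off from the sequence `ω`. -/
def wordOf {p : ℕ} (ω : ℕ → Fin p) (n : ℕ) : List (Fin p) :=
  (List.range n).map ω

/-- The cylinder sets `Δ_{i₁…iₙ} = g_{i₁…i_{n-1}}(I_{iₙ})` of the iterated function
system given by the big interval `I`, the subintervals `Isub i` and the maps `g i`;
by convention `Δ_∅ = I`. -/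
def cylOf {p : ℕ} (I : Set ℝ) (Isub : Fin p → Set ℝ) (g : Fin p → ℝ → ℝ) :
    List (Fin p) → Set ℝ
  | [] => I
  | [i] => Isub i
  | i :: j :: w => g i '' cylOf I Isub g (j :: w)

/-- The sequence `ω` contains the word `w` as a sub-word starting at position `n`. -/
def containsAt {p : ℕ} (ω : ℕ → Fin p) (w : List (Fin p)) (n : ℕ) : Prop :=
  ∀ k : ℕ, (hk : k < w.length) → ω (n + k) = w.get ⟨k, hk⟩

/-- The sequence `ω` belongs to `Σ_Q`, i.e. it contains no word of `Q` as a sub-word. -/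
def avoids {p : ℕ} (Q : Finset (List (Fin p))) (ω : ℕ → Fin p) : Prop :=
  ∀ w ∈ Q, ∀ n : ℕ, ¬ containsAt ω w n

/-- The limit set `Λ_Q = π(Σ_Q)`: points lying, for some `ω ∈ Σ_Q`, in all the
cylinders `Δ_{ω₀…ω_{n-1}}`. -/
def limitSetOf {p : ℕ} (I : Set ℝ) (Isub : Fin p → Set ℝ) (g : Fin p → ℝ → ℝ)
    (Q : Finset (List (Fin p))) : Set ℝ :=
  { x | ∃ ω : ℕ → Fin p, avoids Q ω ∧ ∀ n : ℕ, x ∈ cylOf I Isub g (wordOf ω n) }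

/-- `gIter g ω n = g_{i_n … i_1} = g_{ω (n-1)} ∘ ⋯ ∘ g_{ω 0}`. -/
def gIter {p : ℕ} (g : Fin p → ℝ → ℝ) (ω : ℕ → Fin p) : ℕ → ℝ → ℝ
  | 0 => id
  | n + 1 => g (ω n) ∘ gIter g ω n

/-- The derivative of the composition `gIter g ω n` at `x` (chain rule product). -/
noncomputable def gIterDer {p : ℕ} (g gder : Fin p → ℝ → ℝ) (ω : ℕ → Fin p)
    (n : ℕ) (x : ℝ) : ℝ :=
  ∏ k ∈ Finset.range n, gder (ω k) (gIter g ω k x)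

/-- Prepending the finite word `w` to the infinite sequence `ω`. -/
def prependWord {p : ℕ} (w : List (Fin p)) (ω : ℕ → Fin p) : ℕ → Fin p :=
  fun n => if h : n < w.length then w.get ⟨n, h⟩ else ω (n - w.length)

/-- `l(Σ_Q)`: the minimum, over all finite sets `Q'` of words with `Σ_{Q'} = Σ_Q`,
of the maximal length `l(Q')` of words of `Q'`. -/
noncomputable def minRepLen {p : ℕ} (Q : Finset (List (Fin p))) : ℕ :=
  sInf { n : ℕ | ∃ Q' : Finset (List (Fin p)),
    (∀ ω : ℕ → Fin p, avoids Q' ω ↔ avoids Q ω) ∧ Q'.sup List.length = n }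

/-- A `C^{1+Lip}` expansive and transitive Markov system `(Λ_Q, f)`. -/
structure ExpansiveMarkovSystem (p : ℕ) where
  /-- the alphabet is nonempty -/
  hp : 0 < p
  /-- the ambient closed interval `I` -/
  I : Set ℝ
  hI : ∃ a b : ℝ, a < b ∧ I = Set.Icc a b
  /-- the pairwise disjoint closed subintervals `I₁, …, I_p` -/
  Isub : Fin p → Set ℝ
  hIsub : ∀ i, ∃ a b : ℝ, a < b ∧ Isub i = Set.Icc a b
  hsubI : ∀ i, Isub i ⊆ I
  hdisj : ∀ i j, i ≠ j → Disjoint (Isub i) (Isub j)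
  /-- the contractions `g i`, defined on `⋃ j, Isub j` -/
  g : Fin p → ℝ → ℝ
  /-- the derivative of `g i` on `⋃ j, Isub j` -/
  gder : Fin p → ℝ → ℝ
  hg_inj : ∀ i, Set.InjOn (g i) (⋃ j, Isub j)
  hg_range : ∀ i, g i '' (⋃ j, Isub j) ⊆ interior (Isub i)
  hg_deriv : ∀ i, ∀ x ∈ ⋃ j, Isub j,
    HasDerivWithinAt (g i) (gder i x) (⋃ j, Isub j) x
  hgder_ne : ∀ i, ∀ x ∈ ⋃ j, Isub j, gder i x ≠ 0
  hgder_cont : ∀ i, ContinuousOn (gder i) (⋃ j, Isub j)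
  /-- `log |g i'|` is Lipschitz on the domain -/
  hgder_lip : ∀ i, ∃ θ : ℝ, ∀ x ∈ ⋃ j, Isub j, ∀ y ∈ ⋃ j, Isub j,
    abs (Real.log (abs (gder i x)) - Real.log (abs (gder i y))) ≤ θ * |x - y|
  /-- the expanding map `f`, with `f (g i x) = x` -/
  f : ℝ → ℝ
  /-- the derivative `f'` of `f` on the ranges of the `g i` -/
  fder : ℝ → ℝ
  hf : ∀ i, ∀ x ∈ ⋃ j, Isub j, f (g i x) = x
  hfder : ∀ i, ∀ x ∈ ⋃ j, Isub j, fder (g i x) = (gder i x)⁻¹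
  /-- the generator (expansivity) condition: `d_n → 0` -/
  hgen : ∀ ε : ℝ, 0 < ε → ∃ N : ℕ, ∀ w : List (Fin p), N ≤ w.length →
    Metric.diam (cylOf I Isub g w) < ε
  /-- the finite set of forbidden words -/
  Q : Finset (List (Fin p))
  /-- `Σ_Q` is completely invariant: `σ(Σ_Q) = Σ_Q` -/
  hQinv : ∀ ω : ℕ → Fin p, avoids Q ω →
    ∃ ω' : ℕ → Fin p, avoids Q ω' ∧ ∀ n : ℕ, ω' (n + 1) = ω n
  /-- `f|Λ_Q` is topologically transitive -/
  htrans : ∀ U V : Set ℝ, IsOpen U → IsOpen V →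
    (U ∩ limitSetOf I Isub g Q).Nonempty → (V ∩ limitSetOf I Isub g Q).Nonempty →
    ∃ n : ℕ, ∃ x ∈ U ∩ limitSetOf I Isub g Q, f^[n] x ∈ V

namespace ExpansiveMarkovSystem

variable {p : ℕ} (S : ExpansiveMarkovSystem p)

/-- The common domain `⋃ j, I_j` of the maps `g i`. -/
def dom : Set ℝ := ⋃ j, S.Isub j

/-- The cylinder `Δ_w` associated to the word `w`. -/
def cyl (w : List (Fin p)) : Set ℝ := cylOf S.I S.Isub S.g w

/-- The limit set `Λ_Q`. -/
def limitSet : Set ℝ := limitSetOf S.I S.Isub S.g S.Q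

/-- The domain of `f`, i.e. the union of the ranges of the `g i`. -/
def domF : Set ℝ := ⋃ i, S.g i '' S.dom

/-- The derivative `(fⁿ)'(x)` of the `n`-th iterate of `f` at `x`. -/
noncomputable def derIter (n : ℕ) (x : ℝ) : ℝ :=
  ∏ k ∈ Finset.range n, S.fder (S.f^[k] x)

/-- The Lyapunov exponent `χ(x) = limsup (1/n) log |(fⁿ)'(x)|`. -/
noncomputable def lyap (x : ℝ) : ℝ :=
  Filter.limsup (fun n : ℕ => Real.log |S.derIter n x| / n) Filter.atTop

/-- The set `H` of points of `Λ_Q` with infinitely many hyperbolic instants. -/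
def hypSet : Set ℝ :=
  { x ∈ S.limitSet | ∃ c₁ : ℝ, 0 < c₁ ∧ ∃ c₂ : ℝ, 0 < c₂ ∧
      ∃ n : ℕ → ℕ, StrictMono n ∧
        ∃ r : ℕ → ℝ, (∀ k, 0 < r k) ∧ Antitone r ∧
          Filter.Tendsto r Filter.atTop (nhds 0) ∧
          ∀ k : ℕ,
            (∀ y ∈ Metric.ball x (r k), ∀ j < n k, S.f^[j] y ∈ S.domF) ∧
            c₁ < Metric.diam (S.f^[n k] '' Metric.ball x (r k)) ∧
            (∀ y ∈ Metric.ball x (r k), ∀ z ∈ Metric.ball x (r k),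
              |S.derIter (n k) y| / |S.derIter (n k) z| < c₂) }

/-- `x` is a parabolic periodic point: `f^m(x) = x` and `|(f^m)'(x)| = 1`. -/
def IsParabolicPeriodic (x : ℝ) : Prop :=
  x ∈ S.limitSet ∧ ∃ m : ℕ, 1 ≤ m ∧ S.f^[m] x = x ∧ |S.derIter m x| = 1

/-- `ν` is a `t`-conformal (Borel probability) measure supported on `Λ_Q`. -/
def IsConformal (ν : Measure ℝ) (t : ℝ) : Prop :=
  IsProbabilityMeasure ν ∧ ν S.limitSetᶜ = 0 ∧
    ∀ A : Set ℝ, MeasurableSet A → A ⊆ S.limitSet → Set.InjOn S.f A →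
      ν (S.f '' A) = ∫⁻ x in A, ENNReal.ofReal (|S.fder x| ^ t) ∂ν

/-- `t_c = inf {t ≥ 0 : a t-conformal measure on Λ_Q exists}`. -/
noncomputable def tc : ℝ :=
  sInf { t : ℝ | 0 ≤ t ∧ ∃ ν : Measure ℝ, S.IsConformal ν t }

/-- `n` is a hyperbolic time for `x` with exponent `α`. -/
def IsHypTime (α : ℝ) (x : ℝ) (n : ℕ) : Prop :=
  ∀ k : ℕ, 1 ≤ k → k ≤ n → Real.exp (k * α) ≤ |S.derIter k (S.f^[n - k] x)|

/-- `H_HT(α)`: the points of `Λ_Q` with infinitely many hyperbolic times with exponent `α`. -/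
def HHT (α : ℝ) : Set ℝ :=
  { x ∈ S.limitSet | ∀ N : ℕ, ∃ n : ℕ, N ≤ n ∧ S.IsHypTime α x n }

end ExpansiveMarkovSystem
lemma wordOf_succ (ω : ℕ → Fin p) (n : ℕ) :
    wordOf ω (n + 1) = ω 0 :: wordOf (fun j => ω (j + 1)) n := by
  simp [wordOf, List.range_succ_eq_map, Function.comp_def]

lemma wordOf_length (ω : ℕ → Fin p) (n : ℕ) : (wordOf ω n).length = n := by
  simp [wordOf]

lemma wordOf_ne_nil (ω : ℕ → Fin p) {n : ℕ} (hn : 0 < n) : wordOf ω n ≠ [] := by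
  intro h
  have := wordOf_length ω n
  rw [h] at this
  simp at this
  omega

lemma wordOf_one (ω : ℕ → Fin p) : wordOf ω 1 = [ω 0] := by
  simp [wordOf, List.range_succ]


namespace ExpansiveMarkovSystem

variable {p : ℕ} (S : ExpansiveMarkovSystem p)

lemma isub_sub_dom (i : Fin p) : S.Isub i ⊆ S.dom := Set.subset_iUnion _ i

lemma g_contOn (i : Fin p) : ContinuousOn (S.g i) S.dom :=
  fun x hx => (S.hg_deriv i x hx).continuousWithinAt

lemma cyl_cons (i : Fin p) {w : List (Fin p)} (hw : w ≠ []) :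
    cylOf S.I S.Isub S.g (i :: w) = S.g i '' cylOf S.I S.Isub S.g w := by
  cases w with
  | nil => exact absurd rfl hw
  | cons j t => rfl

lemma cyl_struct : ∀ (w : List (Fin p)), w ≠ [] →
    ∃ a b : ℝ, a < b ∧ cylOf S.I S.Isub S.g w = Set.Icc a b ∧
      Set.Icc a b ⊆ S.dom ∧ Set.Ioo a b ⊆ interior S.dom := by
  intro w
  induction w with
  | nil => intro h; exact absurd rfl h
  | cons i t ih =>
    intro _
    cases t with
    | nil =>
      obtain ⟨a, b, hab, hEq⟩ := S.hIsub i
      refine ⟨a, b, hab, hEq, ?_, ?_⟩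
      · rw [← hEq]; exact S.isub_sub_dom i
      · have h1 : Set.Ioo a b = interior (S.Isub i) := by rw [hEq, interior_Icc]
        rw [h1]; exact interior_mono (S.isub_sub_dom i)
    | cons j s =>
      obtain ⟨a, b, hab, hEq, hsub, _⟩ := ih (List.cons_ne_nil j s)
      have hcont : ContinuousOn (S.g i) (Set.Icc a b) := (S.g_contOn i).mono hsub
      have hcomp : IsCompact (S.g i '' Set.Icc a b) :=
        (isCompact_Icc).image_of_continuousOn hcont
      have hconn : IsConnected (S.g i '' Set.Icc a b) := by
        refine ⟨⟨S.g i a, Set.mem_image_of_mem _ (Set.left_mem_Icc.2 hab.le)⟩, ?_⟩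
        exact (isPreconnected_Icc).image _ hcont
      have hK := eq_Icc_of_connected_compact hconn hcomp
      set a' := sInf (S.g i '' Set.Icc a b)
      set b' := sSup (S.g i '' Set.Icc a b)
      have hKint : S.g i '' Set.Icc a b ⊆ interior (S.Isub i) := by
        refine subset_trans ?_ (S.hg_range i)
        exact Set.image_mono hsub
      have hma : S.g i a ∈ Set.Icc a' b' := by
        rw [← hK]; exact Set.mem_image_of_mem _ (Set.left_mem_Icc.2 hab.le)
      have hmb : S.g i b ∈ Set.Icc a' b' := by
        rw [← hK]; exact Set.mem_image_of_mem _ (Set.right_mem_Icc.2 hab.le)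
      have hne : S.g i a ≠ S.g i b := by
        intro h
        exact hab.ne (S.hg_inj i (hsub (Set.left_mem_Icc.2 hab.le))
          (hsub (Set.right_mem_Icc.2 hab.le)) h)
      have hab' : a' < b' := by
        rcases lt_or_ge a' b' with h | h
        · exact h
        · exfalso
          apply hne
          have h1 : S.g i a = a' := le_antisymm (hma.2.trans h) hma.1
          have h2 : S.g i b = a' := le_antisymm (hmb.2.trans h) hmb.1
          rw [h1, h2]
      have hcyl : cylOf S.I S.Isub S.g (i :: j :: s) = Set.Icc a' b' := by
        show S.g i '' cylOf S.I S.Isub S.g (j :: s) = _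
        rw [hEq, hK]
      have hIcc' : Set.Icc a' b' ⊆ interior (S.Isub i) := by rw [← hK]; exact hKint
      refine ⟨a', b', hab', hcyl, ?_, ?_⟩
      · exact hIcc'.trans (interior_subset.trans (S.isub_sub_dom i))
      · exact (Set.Ioo_subset_Icc_self.trans hIcc').trans (interior_mono (S.isub_sub_dom i))

lemma cyl_subset_dom {w : List (Fin p)} (hw : w ≠ []) :
    cylOf S.I S.Isub S.g w ⊆ S.dom := by
  obtain ⟨a, b, _, hEq, hsub, _⟩ := S.cyl_struct w hw
  rw [hEq]; exact hsub

lemma cyl_subset_I : ∀ w : List (Fin p), cylOf S.I S.Isub S.g w ⊆ S.I := by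
  intro w
  cases w with
  | nil => exact le_refl _
  | cons i t =>
    cases t with
    | nil => exact S.hsubI i
    | cons j s =>
      show S.g i '' cylOf S.I S.Isub S.g (j :: s) ⊆ S.I
      refine subset_trans (Set.image_mono (S.cyl_subset_dom (List.cons_ne_nil j s))) ?_
      exact ((S.hg_range i).trans interior_subset).trans (S.hsubI i)

lemma I_bounded : Bornology.IsBounded S.I := by
  obtain ⟨a, b, _, hEq⟩ := S.hI
  rw [hEq]; exact isBounded_Icc a b

lemma cyl_bounded (w : List (Fin p)) : Bornology.IsBounded (cylOf S.I S.Isub S.g w) :=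
  S.I_bounded.subset (S.cyl_subset_I w)

lemma diam_cyl_le (w : List (Fin p)) :
    Metric.diam (cylOf S.I S.Isub S.g w) ≤ Metric.diam S.I :=
  Metric.diam_mono (S.cyl_subset_I w) S.I_bounded

/-- A common Lipschitz constant for all the `log |g i'|`. -/
noncomputable def thC : ℝ := ∑ i : Fin p, |Classical.choose (S.hgder_lip i)|

lemma thC_nonneg : 0 ≤ S.thC := Finset.sum_nonneg fun _ _ => abs_nonneg _

lemma thC_lip (i : Fin p) {x y : ℝ} (hx : x ∈ S.dom) (hy : y ∈ S.dom) :
    abs (Real.log |S.gder i x| - Real.log |S.gder i y|) ≤ S.thC * |x - y| := by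
  have hsp := Classical.choose_spec (S.hgder_lip i)
  refine (hsp x hx y hy).trans ?_
  have h1 : Classical.choose (S.hgder_lip i) ≤ S.thC := by
    refine le_trans (le_abs_self _) ?_
    exact Finset.single_le_sum (f := fun j => |Classical.choose (S.hgder_lip j)|)
      (fun _ _ => abs_nonneg _) (Finset.mem_univ i)
  exact mul_le_mul_of_nonneg_right h1 (abs_nonneg _)

lemma slope_step (i : Fin p) {a b : ℝ} (hab : a < b) (hsub : Set.Icc a b ⊆ S.dom)
    (hIoo : Set.Ioo a b ⊆ interior S.dom) :
    ∃ ξ ∈ Set.Ioo a b, S.g i b - S.g i a = S.gder i ξ * (b - a) := by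
  obtain ⟨ξ, hξ, hsl⟩ := exists_hasDerivAt_eq_slope (S.g i) (S.gder i) hab
    ((S.g_contOn i).mono hsub)
    (fun y hy => (S.hg_deriv i y (interior_subset (hIoo hy))).hasDerivAt
      (mem_interior_iff_mem_nhds.1 (hIoo hy)))
  refine ⟨ξ, hξ, ?_⟩
  rw [hsl]
  rw [div_mul_cancel₀ _ (sub_ne_zero.2 hab.ne')]

lemma step_est (i : Fin p) {w : List (Fin p)} (hw : w ≠ []) {z : ℝ}
    (hz : z ∈ cylOf S.I S.Isub S.g w) :
    |S.gder i z| * Metric.diam (cylOf S.I S.Isub S.g w) ≤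
      Metric.diam (cylOf S.I S.Isub S.g (i :: w)) *
        Real.exp (S.thC * Metric.diam (cylOf S.I S.Isub S.g w)) := by
  obtain ⟨a, b, hab, hEq, hsub, hIoo⟩ := S.cyl_struct w hw
  obtain ⟨ξ, hξ, hsl⟩ := S.slope_step i hab hsub hIoo
  rw [hEq] at hz
  have hzdom : z ∈ S.dom := hsub hz
  have hξI : ξ ∈ Set.Icc a b := Set.Ioo_subset_Icc_self hξ
  have hξdom : ξ ∈ S.dom := hsub hξI
  have hdiam : Metric.diam (cylOf S.I S.Isub S.g w) = b - a := by
    rw [hEq, Real.diam_Icc hab.le]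
  have hzpos : 0 < |S.gder i z| := abs_pos.2 (S.hgder_ne i z hzdom)
  have hξpos : 0 < |S.gder i ξ| := abs_pos.2 (S.hgder_ne i ξ hξdom)
  -- distortion
  have hlip := S.thC_lip i hzdom hξdom
  have hzb : |z - ξ| ≤ b - a := by
    rw [abs_le]
    constructor
    · linarith [hz.1, hz.2, hξI.1, hξI.2]
    · linarith [hz.1, hz.2, hξI.1, hξI.2]
  have hlog : Real.log |S.gder i z| ≤ Real.log |S.gder i ξ| + S.thC * (b - a) := by
    have h1 : Real.log |S.gder i z| - Real.log |S.gder i ξ| ≤ S.thC * |z - ξ| :=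
      (le_abs_self _).trans hlip
    have h2 : S.thC * |z - ξ| ≤ S.thC * (b - a) :=
      mul_le_mul_of_nonneg_left hzb S.thC_nonneg
    linarith
  have key1 : |S.gder i z| ≤ |S.gder i ξ| * Real.exp (S.thC * (b - a)) := by
    calc |S.gder i z| = Real.exp (Real.log |S.gder i z|) := (Real.exp_log hzpos).symm
      _ ≤ Real.exp (Real.log |S.gder i ξ| + S.thC * (b - a)) := Real.exp_le_exp.2 hlog
      _ = |S.gder i ξ| * Real.exp (S.thC * (b - a)) := by
          rw [Real.exp_add, Real.exp_log hξpos]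
  have key2 : |S.gder i ξ| * (b - a) ≤ Metric.diam (cylOf S.I S.Isub S.g (i :: w)) := by
    have hmem1 : S.g i a ∈ cylOf S.I S.Isub S.g (i :: w) := by
      rw [S.cyl_cons i hw, hEq]
      exact Set.mem_image_of_mem _ (Set.left_mem_Icc.2 hab.le)
    have hmem2 : S.g i b ∈ cylOf S.I S.Isub S.g (i :: w) := by
      rw [S.cyl_cons i hw, hEq]
      exact Set.mem_image_of_mem _ (Set.right_mem_Icc.2 hab.le)
    have h3 : |S.gder i ξ| * (b - a) = |S.g i b - S.g i a| := by
      rw [hsl, abs_mul, abs_of_pos (sub_pos.2 hab)]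
    rw [h3, ← Real.dist_eq]
    exact Metric.dist_le_diam_of_mem (S.cyl_bounded (i :: w)) hmem2 hmem1
  rw [hdiam]
  calc |S.gder i z| * (b - a)
      ≤ (|S.gder i ξ| * Real.exp (S.thC * (b - a))) * (b - a) :=
        mul_le_mul_of_nonneg_right key1 (sub_pos.2 hab).le
    _ = (|S.gder i ξ| * (b - a)) * Real.exp (S.thC * (b - a)) := by ring
    _ ≤ Metric.diam (cylOf S.I S.Isub S.g (i :: w)) * Real.exp (S.thC * (b - a)) :=
        mul_le_mul_of_nonneg_right key2 (Real.exp_pos _).le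

end ExpansiveMarkovSystem
namespace ExpansiveMarkovSystem

variable {p : ℕ} (S : ExpansiveMarkovSystem p)

lemma chain_est : ∀ (n : ℕ) (τ : ℕ → Fin p) (y : ℕ → ℝ),
    (∀ k m, y k ∈ cylOf S.I S.Isub S.g (wordOf (fun j => τ (j + k)) m)) →
    (∏ k ∈ Finset.range n, |S.gder (τ k) (y (k + 1))|) * Metric.diam (S.Isub (τ n)) ≤
      Metric.diam (cylOf S.I S.Isub S.g (wordOf τ (n + 1))) *
        Real.exp (S.thC * ∑ k ∈ Finset.range n,
          Metric.diam (cylOf S.I S.Isub S.g (wordOf (fun j => τ (j + (k + 1))) (n - k)))) := by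
  intro n
  induction n with
  | zero =>
    intro τ y _
    simp only [Finset.range_zero, Finset.prod_empty, Finset.sum_empty, mul_zero,
      Real.exp_zero, one_mul, mul_one]
    rw [wordOf_one]
    exact le_refl _
  | succ n ih =>
    intro τ y H
    have IH := ih (fun j => τ (j + 1)) (fun j => y (j + 1)) (fun k m => H (k + 1) m)
    have hw : wordOf (fun j => τ (j + 1)) (n + 1) ≠ [] := wordOf_ne_nil _ (Nat.succ_pos n)
    have hz : y 1 ∈ cylOf S.I S.Isub S.g (wordOf (fun j => τ (j + 1)) (n + 1)) := H 1 (n + 1)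
    have step := S.step_est (τ 0) hw hz
    -- rewrite products and sums
    rw [Finset.prod_range_succ' (fun k => |S.gder (τ k) (y (k + 1))|) n]
    rw [Finset.sum_range_succ'
      (fun k => Metric.diam (cylOf S.I S.Isub S.g (wordOf (fun j => τ (j + (k + 1))) (n + 1 - k)))) n]
    have hconsw : τ 0 :: wordOf (fun j => τ (j + 1)) (n + 1) = wordOf τ (n + 2) :=
      (wordOf_succ τ (n + 1)).symm
    set D1 := Metric.diam (cylOf S.I S.Isub S.g (wordOf (fun j => τ (j + 1)) (n + 1))) with hD1
    set D2 := Metric.diam (cylOf S.I S.Isub S.g (wordOf τ (n + 2))) with hD2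
    have step' : |S.gder (τ 0) (y 1)| * D1 ≤ D2 * Real.exp (S.thC * D1) := by
      rw [hD2, ← hconsw]
      exact step
    have IH' : (∏ k ∈ Finset.range n, |S.gder (τ (k + 1)) (y (k + 1 + 1))|) *
        Metric.diam (S.Isub (τ (n + 1))) ≤
        D1 * Real.exp (S.thC * ∑ k ∈ Finset.range n,
          Metric.diam (cylOf S.I S.Isub S.g (wordOf (fun j => τ (j + (k + 1) + 1)) (n - k)))) := IH
    have hsum_eq : ∀ k, (wordOf (fun j => τ (j + (k + 1) + 1)) (n - k)) =
        (wordOf (fun j => τ (j + (k + 1 + 1))) (n + 1 - (k + 1))) := by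
      intro k
      have h2 : n - k = n + 1 - (k + 1) := by omega
      rw [h2]
      rfl
    simp only [hsum_eq] at IH'
    set A := ∏ k ∈ Finset.range n, |S.gder (τ (k + 1)) (y (k + 1 + 1))| with hA
    set S1 := ∑ k ∈ Finset.range n,
      Metric.diam (cylOf S.I S.Isub S.g (wordOf (fun j => τ (j + (k + 1 + 1))) (n + 1 - (k + 1)))) with hS1
    -- goal : (A * |gder (τ 0) (y 1)|) * diam (Isub (τ (n+1))) ≤ D2 * exp (θ * (S1 + D1))
    have hAnn : 0 ≤ A := Finset.prod_nonneg fun _ _ => abs_nonneg _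
    have hcnn : 0 ≤ |S.gder (τ 0) (y 1)| := abs_nonneg _
    have hexp : Real.exp (S.thC * (S1 + D1)) =
        Real.exp (S.thC * S1) * Real.exp (S.thC * D1) := by
      rw [← Real.exp_add]; ring_nf
    calc (A * |S.gder (τ 0) (y 1)|) * Metric.diam (S.Isub (τ (n + 1)))
        = |S.gder (τ 0) (y 1)| * (A * Metric.diam (S.Isub (τ (n + 1)))) := by ring
      _ ≤ |S.gder (τ 0) (y 1)| * (D1 * Real.exp (S.thC * S1)) :=
          mul_le_mul_of_nonneg_left IH' hcnn
      _ = (|S.gder (τ 0) (y 1)| * D1) * Real.exp (S.thC * S1) := by ring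
      _ ≤ (D2 * Real.exp (S.thC * D1)) * Real.exp (S.thC * S1) :=
          mul_le_mul_of_nonneg_right step' (Real.exp_pos _).le
      _ = D2 * Real.exp (S.thC * (S1 + D1)) := by rw [hexp]; ring

end ExpansiveMarkovSystem
/-- `χ(x) ≥ 0` for every `x ∈ Λ_Q`. -/
theorem lyap_nonneg {p : ℕ} (S : ExpansiveMarkovSystem p) (x : ℝ) (hx : x ∈ S.limitSet) :
    0 ≤ S.lyap x := by
  obtain ⟨ω, -, hcyl⟩ := hx
  -- one-step shift lemma
  have hshift : ∀ (y : ℝ) (τ : ℕ → Fin p),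
      (∀ m, y ∈ cylOf S.I S.Isub S.g (wordOf τ m)) →
      (∀ m, S.f y ∈ cylOf S.I S.Isub S.g (wordOf (fun j => τ (j + 1)) m)) ∧
        y = S.g (τ 0) (S.f y) := by
    intro y τ hy
    have key : ∀ m : ℕ, 0 < m →
        S.f y ∈ cylOf S.I S.Isub S.g (wordOf (fun j => τ (j + 1)) m) ∧
        y = S.g (τ 0) (S.f y) := by
      intro m hm
      have hym := hy (m + 1)
      rw [wordOf_succ, S.cyl_cons _ (wordOf_ne_nil _ hm)] at hym
      obtain ⟨u, hu, hgu⟩ := hym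
      have hudom : u ∈ S.dom := S.cyl_subset_dom (wordOf_ne_nil _ hm) hu
      have hfy : S.f y = u := by rw [← hgu, S.hf (τ 0) u hudom]
      exact ⟨hfy ▸ hu, by rw [hfy, hgu]⟩
    refine ⟨fun m => ?_, (key 1 one_pos).2⟩
    cases m with
    | zero =>
      have h1 := (key 1 one_pos).1
      rw [wordOf_one] at h1
      exact S.hsubI _ h1
    | succ m => exact (key (m + 1) (Nat.succ_pos m)).1
  -- the iterates remain coded by the shifted sequences
  have hiter : ∀ (k : ℕ) (τ : ℕ → Fin p), (∀ j, τ j = ω (j + k)) →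
      ∀ m, S.f^[k] x ∈ cylOf S.I S.Isub S.g (wordOf τ m) := by
    intro k
    induction k with
    | zero =>
      intro τ hτ m
      have heq : wordOf τ m = wordOf ω m :=
        List.map_congr_left (fun a _ => hτ a)
      rw [heq]
      exact hcyl m
    | succ k ihk =>
      intro τ hτ m
      have h1 := (hshift (S.f^[k] x) (fun j => ω (j + k)) (ihk _ (fun j => rfl))).1 m
      have heq : wordOf τ m = wordOf (fun j => ω (j + 1 + k)) m :=
        List.map_congr_left (fun a _ => by
          simp only [hτ a]
          congr 1
          omega)
      rw [Function.iterate_succ_apply', heq]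
      exact h1
  -- structure of the orbit
  have hgx : ∀ k : ℕ, S.f^[k] x = S.g (ω k) (S.f^[k + 1] x) := by
    intro k
    have h := (hshift (S.f^[k] x) (fun j => ω (j + k)) (hiter k _ (fun j => rfl))).2
    rw [Function.iterate_succ_apply']
    simpa using h
  have hdomk : ∀ k : ℕ, S.f^[k] x ∈ S.dom := by
    intro k
    have h := hiter k (fun j => ω (j + k)) (fun j => rfl) 1
    rw [wordOf_one] at h
    exact S.isub_sub_dom _ h
  have hfd : ∀ k : ℕ, S.fder (S.f^[k] x) = (S.gder (ω k) (S.f^[k + 1] x))⁻¹ := by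
    intro k
    have h := S.hfder (ω k) (S.f^[k + 1] x) (hdomk (k + 1))
    rw [← hgx k] at h
    exact h
  have hgpos : ∀ k : ℕ, 0 < |S.gder (ω k) (S.f^[k + 1] x)| :=
    fun k => abs_pos.2 (S.hgder_ne _ _ (hdomk (k + 1)))
  have hder : ∀ n : ℕ, |S.derIter n x| =
      (∏ k ∈ Finset.range n, |S.gder (ω k) (S.f^[k + 1] x)|)⁻¹ := by
    intro n
    have h1 : S.derIter n x = ∏ k ∈ Finset.range n, (S.gder (ω k) (S.f^[k + 1] x))⁻¹ :=
      Finset.prod_congr rfl fun k _ => hfd k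
    rw [h1, Finset.abs_prod, ← Finset.prod_inv_distrib]
    exact Finset.prod_congr rfl fun k _ => abs_inv _
  -- pass to the limsup
  show 0 ≤ Filter.limsup (fun n : ℕ => Real.log |S.derIter n x| / n) Filter.atTop
  by_cases hb : Filter.IsBoundedUnder (· ≤ ·) Filter.atTop
      (fun n : ℕ => Real.log |S.derIter n x| / n)
  · have key : ∀ ε : ℝ, 0 < ε →
        -ε ≤ Filter.limsup (fun n : ℕ => Real.log |S.derIter n x| / n) Filter.atTop := by
      intro ε hε
      refine Filter.le_limsup_of_frequently_le (Filter.Eventually.frequently ?_) hb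
      -- constants
      have hθ0 := S.thC_nonneg
      have hne : (Finset.univ : Finset (Fin p)).Nonempty := ⟨⟨0, S.hp⟩, Finset.mem_univ _⟩
      set L := Finset.univ.inf' hne (fun i => Metric.diam (S.Isub i)) with hLdef
      have hLpos : 0 < L := by
        rw [hLdef, Finset.lt_inf'_iff]
        intro i _
        obtain ⟨a, b, hab, hEq⟩ := S.hIsub i
        rw [hEq, Real.diam_Icc hab.le]
        linarith
      have hLle : ∀ i : Fin p, L ≤ Metric.diam (S.Isub i) := fun i =>
        Finset.inf'_le _ (Finset.mem_univ i)
      have hDI0 : (0:ℝ) ≤ Metric.diam S.I := Metric.diam_nonneg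
      set θ := S.thC with hθdef
      set ε' := min 1 (ε / (2 * (θ + 1))) with hε'def
      have hθ1 : (0:ℝ) < θ + 1 := by linarith
      have hε'pos : 0 < ε' := lt_min one_pos (by positivity)
      have hθε' : θ * ε' ≤ ε / 2 := by
        have h1 : ε' ≤ ε / (2 * (θ + 1)) := min_le_right _ _
        have h2 : θ * ε' ≤ θ * (ε / (2 * (θ + 1))) := mul_le_mul_of_nonneg_left h1 hθ0
        have h3 : θ * (ε / (2 * (θ + 1))) ≤ ε / 2 := by
          rw [show θ * (ε / (2 * (θ + 1))) = ε * θ / (2 * (θ + 1)) by ring,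
            div_le_div_iff₀ (by positivity) two_pos]
          nlinarith
        linarith
      obtain ⟨N, hN⟩ := S.hgen ε' hε'pos
      set C0 := Real.log L - Real.log ε' - θ * (N * Metric.diam S.I) with hC0
      have htend := tendsto_const_div_atTop_nhds_zero_nat C0
      have hev1 : ∀ᶠ n : ℕ in Filter.atTop, -(ε / 2) < C0 / n :=
        htend.eventually (eventually_gt_nhds (by linarith))
      filter_upwards [hev1, Filter.eventually_ge_atTop (max 1 N)] with n hn1 hn2
      have hn1' : 1 ≤ n := le_trans (le_max_left _ _) hn2
      have hnN : N ≤ n := le_trans (le_max_right _ _) hn2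
      -- the chain estimate
      have main : (∏ k ∈ Finset.range n, |S.gder (ω k) (S.f^[k + 1] x)|) *
          Metric.diam (S.Isub (ω n)) ≤
          Metric.diam (cylOf S.I S.Isub S.g (wordOf ω (n + 1))) *
            Real.exp (θ * ∑ k ∈ Finset.range n,
              Metric.diam (cylOf S.I S.Isub S.g (wordOf (fun j => ω (j + (k + 1))) (n - k)))) :=
        S.chain_est n ω (fun k => S.f^[k] x) (fun k m => hiter k _ (fun j => rfl) m)
      set Pn := ∏ k ∈ Finset.range n, |S.gder (ω k) (S.f^[k + 1] x)| with hPn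
      have hPpos : 0 < Pn := Finset.prod_pos fun k _ => hgpos k
      -- bounding the sum of diameters
      have hSig : (∑ k ∈ Finset.range n,
          Metric.diam (cylOf S.I S.Isub S.g (wordOf (fun j => ω (j + (k + 1))) (n - k)))) ≤
          n * ε' + N * Metric.diam S.I := by
        have hterm : ∀ k ∈ Finset.range n,
            Metric.diam (cylOf S.I S.Isub S.g (wordOf (fun j => ω (j + (k + 1))) (n - k))) ≤
            ε' + (if n - k < N then Metric.diam S.I else 0) := by
          intro k _
          by_cases h : n - k < N
          · simp only [h, if_true]
            have := S.diam_cyl_le (wordOf (fun j => ω (j + (k + 1))) (n - k))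
            linarith
          · simp only [h, if_false]
            push_neg at h
            have := hN (wordOf (fun j => ω (j + (k + 1))) (n - k))
              (by rw [wordOf_length]; exact h)
            linarith
        have hcard : (((Finset.range n).filter (fun k => n - k < N)).card : ℝ) ≤ N := by
          have hsub : (Finset.range n).filter (fun k => n - k < N) ⊆ Finset.Ico (n - N) n := by
            intro k hk
            simp only [Finset.mem_filter, Finset.mem_range] at hk
            rw [Finset.mem_Ico]
            omega
          have h1 : ((Finset.range n).filter (fun k => n - k < N)).card ≤ N := by
            calc ((Finset.range n).filter (fun k => n - k < N)).card
                ≤ (Finset.Ico (n - N) n).card := Finset.card_le_card hsub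
              _ = n - (n - N) := Nat.card_Ico _ _
              _ ≤ N := by omega
          exact_mod_cast h1
        calc (∑ k ∈ Finset.range n,
            Metric.diam (cylOf S.I S.Isub S.g (wordOf (fun j => ω (j + (k + 1))) (n - k))))
            ≤ ∑ k ∈ Finset.range n, (ε' + if n - k < N then Metric.diam S.I else 0) :=
              Finset.sum_le_sum hterm
          _ = n * ε' + ∑ k ∈ Finset.range n, (if n - k < N then Metric.diam S.I else 0) := by
              rw [Finset.sum_add_distrib, Finset.sum_const, Finset.card_range, nsmul_eq_mul]
          _ ≤ n * ε' + N * Metric.diam S.I := by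
              have h2 : (∑ k ∈ Finset.range n, (if n - k < N then Metric.diam S.I else 0)) =
                  (((Finset.range n).filter (fun k => n - k < N)).card : ℝ) * Metric.diam S.I := by
                rw [← Finset.sum_filter, Finset.sum_const, nsmul_eq_mul]
              rw [h2]
              nlinarith
      have hDn : Metric.diam (cylOf S.I S.Isub S.g (wordOf ω (n + 1))) ≤ ε' :=
        (hN _ (by rw [wordOf_length]; omega)).le
      -- combining
      have h4 : Pn * L ≤ ε' * Real.exp (θ * (n * ε' + N * Metric.diam S.I)) := by
        calc Pn * L ≤ Pn * Metric.diam (S.Isub (ω n)) :=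
              mul_le_mul_of_nonneg_left (hLle (ω n)) hPpos.le
          _ ≤ Metric.diam (cylOf S.I S.Isub S.g (wordOf ω (n + 1))) *
                Real.exp (θ * ∑ k ∈ Finset.range n,
                  Metric.diam (cylOf S.I S.Isub S.g (wordOf (fun j => ω (j + (k + 1))) (n - k)))) :=
              main
          _ ≤ ε' * Real.exp (θ * (n * ε' + N * Metric.diam S.I)) :=
              mul_le_mul hDn (Real.exp_le_exp.2 (mul_le_mul_of_nonneg_left hSig hθ0))
                (Real.exp_pos _).le hε'pos.le
      have h5 : Real.log Pn ≤ Real.log ε' + θ * (n * ε' + N * Metric.diam S.I) - Real.log L := by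
        have h6 : Pn ≤ ε' * Real.exp (θ * (n * ε' + N * Metric.diam S.I)) / L := by
          rw [le_div_iff₀ hLpos]
          exact h4
        have h7 := Real.log_le_log hPpos h6
        rw [Real.log_div (by positivity) hLpos.ne', Real.log_mul hε'pos.ne'
          (Real.exp_pos _).ne', Real.log_exp] at h7
        linarith
      -- conclude for this n
      show -ε ≤ Real.log |S.derIter n x| / n
      have hu : Real.log |S.derIter n x| = -Real.log Pn := by rw [hder n, Real.log_inv]
      rw [hu]
      have hn0 : (0:ℝ) < n := by exact_mod_cast hn1'
      have hstep : C0 - θ * ε' * n ≤ -Real.log Pn := by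
        have hexpand : θ * (n * ε' + N * Metric.diam S.I)
            = θ * ε' * n + θ * (N * Metric.diam S.I) := by ring
        rw [hC0]
        linarith [h5, hexpand.le, hexpand.ge]
      have h8 : (C0 - θ * ε' * n) / n ≤ -Real.log Pn / n := by
        gcongr
      have h9 : (C0 - θ * ε' * n) / n = C0 / n - θ * ε' := by
        field_simp
      rw [h9] at h8
      linarith
    by_contra hcon
    push_neg at hcon
    have := key (-(Filter.limsup (fun n : ℕ => Real.log |S.derIter n x| / n) Filter.atTop) / 2)
      (by linarith)
    linarith
  · rw [Filter.limsup_eq]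
    have hempty : {a : ℝ | ∀ᶠ n : ℕ in Filter.atTop, Real.log |S.derIter n x| / n ≤ a} = ∅ := by
      rw [Set.eq_empty_iff_forall_notMem]
      intro a ha
      exact hb ⟨a, by simpa [Filter.eventually_map] using ha⟩
    rw [hempty, Real.sInf_empty]
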